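/- arXiv:1710.09982 — 2 statements merged into one kernel-verified Lean document; each statement's English description precedes it below -/
import Mathlib

section
/- For every real ν > 0, the integral ∫₀^∞ (1+z²)^{-(ν+1)/2} {log(1+z²)}² dz equals {D(ν)² − 2D'(ν)}/(2√ν K(ν)), where K(ν) = Γ((ν+1)/2)/(√(πν) Γ(ν/2)), D(ν) = Ψ((ν+1)/2) − Ψ(ν/2), and D'(ν) is the derivative of D at ν. -/
open Real MeasureTheory Set Filter Topology

/-- `K ν = Γ((ν+1)/2) / (√(πν) Γ(ν/2))`. -/
noncomputable def Kfun (ν : ℝ) : ℝ :=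
  Real.Gamma ((ν + 1) / 2) / (Real.sqrt (Real.pi * ν) * Real.Gamma (ν / 2))

/-- The digamma function `Ψ(x) = d/dx log Γ(x)`. -/
noncomputable def digamma (x : ℝ) : ℝ :=
  deriv (fun y => Real.log (Real.Gamma y)) x

/-- `D(ν) = Ψ((ν+1)/2) − Ψ(ν/2)`. -/
noncomputable def Dfun (ν : ℝ) : ℝ :=
  digamma ((ν + 1) / 2) - digamma (ν / 2)

/-! ### Auxiliary lemmas -/

noncomputable def Ffun (k : ℕ) (s : ℝ) : ℝ :=
  ∫ z in Set.Ioi (0:ℝ), (1 + z ^ 2) ^ (-s) * (Real.log (1 + z ^ 2)) ^ k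

section Integrability


-- log bound: for x ≥ 1, ε > 0 : log x ≤ ε⁻¹ * x ^ ε
lemma log_le_rpow_div {x ε : ℝ} (hx : 1 ≤ x) (hε : 0 < ε) :
    Real.log x ≤ ε⁻¹ * x ^ ε := by
  have hx0 : 0 < x := lt_of_lt_of_le one_pos hx
  have h1 : Real.log (x ^ ε) = ε * Real.log x := Real.log_rpow hx0 ε
  have h2 : Real.log (x ^ ε) ≤ x ^ ε := (Real.log_le_sub_one_of_pos (Real.rpow_pos_of_pos hx0 ε)).trans (by linarith [Real.rpow_pos_of_pos hx0 ε])
  rw [h1] at h2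
  rw [inv_mul_eq_div, le_div_iff₀ hε]
  linarith

lemma master_integrable {q : ℝ} (hq : 1/2 < q) :
    IntegrableOn (fun z : ℝ => (1 + z ^ 2) ^ (-q)) (Ioi (0:ℝ)) := by
  have hcont : Continuous fun z : ℝ => (1 + z ^ 2) ^ (-q) := by
    apply Continuous.rpow_const (by continuity)
    intro z; left; positivity
  have h1 : IntegrableOn (fun z : ℝ => (1 + z ^ 2) ^ (-q)) (Ioc (0:ℝ) 1) :=
    hcont.integrableOn_Ioc
  have h2 : IntegrableOn (fun z : ℝ => (1 + z ^ 2) ^ (-q)) (Ioi (1:ℝ)) := by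
    have hint : IntegrableOn (fun z : ℝ => z ^ (-(2*q))) (Ioi (1:ℝ)) :=
      integrableOn_Ioi_rpow_of_lt (by linarith) one_pos
    apply hint.mono' hcont.aestronglyMeasurable.restrict
    filter_upwards [ae_restrict_mem measurableSet_Ioi] with z hz
    have hz1 : (1:ℝ) < z := hz
    have hz0 : (0:ℝ) < z := by linarith
    rw [Real.norm_eq_abs, abs_of_nonneg (Real.rpow_nonneg (by positivity) _)]
    have : z ^ (-(2*q)) = (z ^ 2) ^ (-q) := by
      rw [← Real.rpow_natCast z 2, ← Real.rpow_mul hz0.le]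
      norm_num
    rw [this]
    apply Real.rpow_le_rpow_of_nonpos (by positivity) (by nlinarith) (by linarith)
  have := h1.union h2
  rwa [Set.Ioc_union_Ioi_eq_Ioi (by norm_num : (0:ℝ) ≤ 1)] at this

lemma integrand_cont (r : ℝ) (k : ℕ) :
    Continuous fun z : ℝ => (1 + z ^ 2) ^ (-r) * (Real.log (1 + z ^ 2)) ^ k := by
  apply Continuous.mul
  · apply Continuous.rpow_const (by continuity)
    intro z; left; positivity
  · apply Continuous.pow
    apply Real.continuousOn_log.comp_continuous (by continuity)
    intro z; simp only [Set.mem_compl_iff, Set.mem_singleton_iff]; positivity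

lemma log_integrable {r : ℝ} (hr : 1/2 < r) (k : ℕ) :
    IntegrableOn (fun z : ℝ => (1 + z ^ 2) ^ (-r) * (Real.log (1 + z ^ 2)) ^ k) (Ioi (0:ℝ)) := by
  set ε : ℝ := (r - 1/2) / (k + 1) with hε_def
  have hε : 0 < ε := div_pos (by linarith) (by positivity)
  have hkε : (k : ℝ) * ε < r - 1/2 := by
    rw [hε_def, mul_div_assoc', div_lt_iff₀ (by positivity)]
    nlinarith [hr]
  set q : ℝ := r - k * ε with hq_def
  have hq : 1/2 < q := by simp only [hq_def]; linarith
  have hbd : IntegrableOn (fun z : ℝ => ε⁻¹ ^ k * (1 + z ^ 2) ^ (-q)) (Ioi (0:ℝ)) :=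
    (master_integrable hq).const_mul _
  apply hbd.mono' (integrand_cont r k).aestronglyMeasurable.restrict
  filter_upwards [ae_restrict_mem measurableSet_Ioi] with z _
  have hb : (1:ℝ) ≤ 1 + z ^ 2 := by nlinarith
  have hb0 : (0:ℝ) < 1 + z ^ 2 := by positivity
  have hlog : 0 ≤ Real.log (1 + z ^ 2) := Real.log_nonneg hb
  rw [Real.norm_eq_abs, abs_of_nonneg (by positivity)]
  have h1 : (Real.log (1 + z ^ 2)) ^ k ≤ (ε⁻¹ * (1 + z ^ 2) ^ ε) ^ k :=
    pow_le_pow_left₀ hlog (log_le_rpow_div hb hε) k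
  have h2 : (1 + z ^ 2) ^ (-r) * (ε⁻¹ * (1 + z ^ 2) ^ ε) ^ k
      = ε⁻¹ ^ k * (1 + z ^ 2) ^ (-q) := by
    rw [mul_pow, ← Real.rpow_natCast ((1 + z ^ 2) ^ ε) k, ← Real.rpow_mul hb0.le, hq_def,
      show -(r - ↑k * ε) = -r + ε * ↑k by ring, Real.rpow_add hb0]
    ring
  calc (1 + z ^ 2) ^ (-r) * (Real.log (1 + z ^ 2)) ^ k
      ≤ (1 + z ^ 2) ^ (-r) * (ε⁻¹ * (1 + z ^ 2) ^ ε) ^ k := by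
        apply mul_le_mul_of_nonneg_left h1 (Real.rpow_nonneg hb0.le _)
    _ = ε⁻¹ ^ k * (1 + z ^ 2) ^ (-q) := h2

end Integrability

section Deriv

lemma hasDerivAt_Ffun {k : ℕ} {s₀ : ℝ} (hs : 1/2 < s₀) :
    HasDerivAt (Ffun k) (-(Ffun (k+1) s₀)) s₀ := by
  set ε : ℝ := (s₀ - 1/2) / 2 with hε_def
  have hε : 0 < ε := by simp only [hε_def]; linarith
  have key := hasDerivAt_integral_of_dominated_loc_of_deriv_le (μ := volume.restrict (Ioi (0:ℝ)))
    (F := fun s z => (1 + z ^ 2) ^ (-s) * (Real.log (1 + z ^ 2)) ^ k)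
    (F' := fun s z => -((1 + z ^ 2) ^ (-s) * (Real.log (1 + z ^ 2)) ^ (k+1)))
    (x₀ := s₀)
    (bound := fun z => (1 + z ^ 2) ^ (-(s₀ - ε)) * (Real.log (1 + z ^ 2)) ^ (k+1))
    (Metric.ball_mem_nhds s₀ hε)
    (Eventually.of_forall fun s => (integrand_cont s k).aestronglyMeasurable.restrict)
    (log_integrable hs k)
    ((integrand_cont s₀ (k+1)).neg.aestronglyMeasurable.restrict)
    ?_ (log_integrable (by linarith) (k+1)) ?_
  · have : (∫ z in Ioi (0:ℝ), -((1 + z ^ 2) ^ (-s₀) * (Real.log (1 + z ^ 2)) ^ (k+1)))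
        = -(Ffun (k+1) s₀) := by
      rw [integral_neg]; rfl
    rw [this] at key
    exact key.2
  · -- bound
    filter_upwards [ae_restrict_mem measurableSet_Ioi] with z hz
    intro x hx
    have hb : (1:ℝ) ≤ 1 + z ^ 2 := by nlinarith [sq_nonneg z]
    have hb0 : (0:ℝ) < 1 + z ^ 2 := by positivity
    have hlog : 0 ≤ Real.log (1 + z ^ 2) := Real.log_nonneg hb
    rw [Real.norm_eq_abs, abs_neg, abs_of_nonneg (by positivity)]
    have hxε : s₀ - ε ≤ x := by
      have := abs_lt.mp (mem_ball_iff_norm.mp hx)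
      linarith [this.1]
    exact mul_le_mul_of_nonneg_right
      (Real.rpow_le_rpow_of_exponent_le hb (by linarith)) (by positivity)
  · -- differentiability
    filter_upwards [ae_restrict_mem measurableSet_Ioi] with z hz
    intro x _
    have hb0 : (0:ℝ) < 1 + z ^ 2 := by positivity
    set L : ℝ := Real.log (1 + z ^ 2) with hL
    have heq : (fun s : ℝ => (1 + z ^ 2) ^ (-s) * L ^ k)
        = fun s : ℝ => Real.exp (L * (-s)) * L ^ k := by
      funext s; rw [Real.rpow_def_of_pos hb0]
    rw [heq]
    have h1 : HasDerivAt (fun s : ℝ => L * (-s)) (-L) x := by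
      simpa using ((hasDerivAt_id x).neg.const_mul L)
    have h2 : HasDerivAt (fun s : ℝ => Real.exp (L * (-s))) (Real.exp (L * (-x)) * (-L)) x :=
      (Real.hasDerivAt_exp _).comp x h1
    have h3 := h2.mul_const (L ^ k)
    refine h3.congr_deriv ?_
    beta_reduce
    rw [Real.rpow_def_of_pos hb0]
    ring

end Deriv

section Beta

lemma real_beta {a b : ℝ} (ha : 0 < a) (hb : 0 < b) :
    ∫ x in Set.Ioo (0:ℝ) 1, x ^ (a-1) * (1-x) ^ (b-1)
      = Real.Gamma a * Real.Gamma b / Real.Gamma (a+b) := by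
  have hab : (0:ℝ) < a + b := by linarith
  have hC := Complex.Gamma_mul_Gamma_eq_betaIntegral
    (s := (a:ℂ)) (t := (b:ℂ)) (by simpa using ha) (by simpa using hb)
  have hBeta : Complex.betaIntegral a b
      = ((∫ x in Set.Ioo (0:ℝ) 1, x ^ (a-1) * (1-x) ^ (b-1) : ℝ) : ℂ) := by
    rw [Complex.betaIntegral]
    rw [intervalIntegral.integral_of_le (by norm_num : (0:ℝ) ≤ 1),
      MeasureTheory.integral_Ioc_eq_integral_Ioo]
    rw [show ((∫ x in Set.Ioo (0:ℝ) 1, x ^ (a-1) * (1-x) ^ (b-1) : ℝ) : ℂ)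
        = ∫ x in Set.Ioo (0:ℝ) 1, ((x ^ (a-1) * (1-x) ^ (b-1) : ℝ) : ℂ) from
      (integral_ofReal (𝕜 := ℂ)).symm]
    apply setIntegral_congr_fun measurableSet_Ioo
    intro x hx
    obtain ⟨hx0, hx1⟩ := hx
    rw [show ((a:ℂ) - 1) = ((a-1 : ℝ) : ℂ) by push_cast; ring,
      show ((b:ℂ) - 1) = ((b-1 : ℝ) : ℂ) by push_cast; ring]
    simp only []
    rw [show (1 - (x:ℂ)) = ((1-x : ℝ) : ℂ) by push_cast; ring,
      ← Complex.ofReal_cpow hx0.le, ← Complex.ofReal_cpow (by linarith : (0:ℝ) ≤ 1 - x)]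
    push_cast
    ring
  rw [hBeta] at hC
  have hC2 : ((Real.Gamma a * Real.Gamma b : ℝ) : ℂ)
      = ((Real.Gamma (a+b) * ∫ x in Set.Ioo (0:ℝ) 1, x ^ (a-1) * (1-x) ^ (b-1) : ℝ) : ℂ) := by
    push_cast
    rw [Complex.Gamma_ofReal, Complex.Gamma_ofReal, ← Complex.ofReal_add, Complex.Gamma_ofReal] at hC
    exact hC
  have := Complex.ofReal_inj.mp hC2
  have hG : Real.Gamma (a+b) ≠ 0 := (Real.Gamma_pos_of_pos hab).ne'
  field_simp
  linarith [this]

end Beta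

section ChangeVar

noncomputable def cov (x : ℝ) : ℝ := x ^ (1/2 : ℝ) * (1-x) ^ (-(1/2) : ℝ)
noncomputable def cov' (x : ℝ) : ℝ := 2⁻¹ * (x ^ (-(1/2) : ℝ) * (1-x) ^ (-(3/2) : ℝ))

lemma cov_sq {x : ℝ} (hx : x ∈ Ioo (0:ℝ) 1) : cov x ^ 2 = x * (1-x)⁻¹ := by
  obtain ⟨h0, h1⟩ := hx
  have h1x : (0:ℝ) < 1 - x := by linarith
  rw [cov, mul_pow, ← Real.rpow_natCast (x ^ (1/2:ℝ)) 2, ← Real.rpow_natCast ((1-x) ^ (-(1/2):ℝ)) 2,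
    ← Real.rpow_mul h0.le, ← Real.rpow_mul h1x.le]
  norm_num
  rw [Real.rpow_neg_one]
  left; rfl

lemma cov_pos {x : ℝ} (hx : x ∈ Ioo (0:ℝ) 1) : 0 < cov x := by
  obtain ⟨h0, h1⟩ := hx
  have h1x : (0:ℝ) < 1 - x := by linarith
  exact mul_pos (Real.rpow_pos_of_pos h0 _) (Real.rpow_pos_of_pos h1x _)

lemma cov_hasDeriv {x : ℝ} (hx : x ∈ Ioo (0:ℝ) 1) : HasDerivAt cov (cov' x) x := by
  obtain ⟨h0, h1⟩ := hx
  have h1x : (0:ℝ) < 1 - x := by linarith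
  have ha : HasDerivAt (fun y : ℝ => y ^ (1/2 : ℝ)) ((1/2) * x ^ (1/2 - 1 : ℝ)) x :=
    Real.hasDerivAt_rpow_const (Or.inl h0.ne')
  have hb0 : HasDerivAt (fun y : ℝ => 1 - y) (-1) x := by
    simpa using (hasDerivAt_id x).const_sub 1
  have hb1 : HasDerivAt (fun t : ℝ => t ^ (-(1/2) : ℝ)) ((-(1/2)) * (1-x) ^ (-(1/2) - 1 : ℝ)) (1-x) :=
    Real.hasDerivAt_rpow_const (Or.inl h1x.ne')
  have hb : HasDerivAt (fun y : ℝ => (1 - y) ^ (-(1/2) : ℝ))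
      ((-(1/2)) * (1-x) ^ (-(1/2) - 1 : ℝ) * (-1)) x := hb1.comp x hb0
  have h : HasDerivAt (fun y : ℝ => y ^ (1/2 : ℝ) * (1 - y) ^ (-(1/2) : ℝ))
      ((1/2) * x ^ (1/2 - 1 : ℝ) * (1 - x) ^ (-(1/2) : ℝ) + x ^ (1/2 : ℝ) * ((-(1/2)) * (1-x) ^ (-(1/2) - 1 : ℝ) * (-1))) x := ha.mul hb
  refine h.congr_deriv ?_
  rw [cov']
  have e1 : x ^ (1/2 : ℝ) = x * x ^ (-(1/2) : ℝ) := by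
    rw [← Real.rpow_one_add' h0.le (by norm_num)]; norm_num
  have e2 : (1-x) ^ (-(1/2) : ℝ) = (1-x) * (1-x) ^ (-(3/2) : ℝ) := by
    rw [← Real.rpow_one_add' h1x.le (by norm_num)]; norm_num
  have e3 : (1/2 - 1 : ℝ) = -(1/2) := by norm_num
  have e4 : (-(1/2) - 1 : ℝ) = -(3/2) := by norm_num
  rw [e3, e4, e1, e2]
  ring

lemma cov_inj : InjOn cov (Ioo (0:ℝ) 1) := by
  intro x hx y hy hxy
  have h := congrArg (· ^ 2) hxy
  rw [cov_sq hx, cov_sq hy] at h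
  obtain ⟨hx0, hx1⟩ := hx; obtain ⟨hy0, hy1⟩ := hy
  have h1x : (0:ℝ) < 1 - x := by linarith
  have h1y : (0:ℝ) < 1 - y := by linarith
  field_simp at h
  nlinarith

lemma cov_image : cov '' Ioo (0:ℝ) 1 = Ioi (0:ℝ) := by
  apply Subset.antisymm
  · rintro _ ⟨x, hx, rfl⟩
    exact cov_pos hx
  · intro z hz
    have hz0 : (0:ℝ) < z := hz
    have hd : (0:ℝ) < 1 + z ^ 2 := by positivity
    refine ⟨z ^ 2 / (1 + z ^ 2), ⟨by positivity, by rw [div_lt_one hd]; nlinarith⟩, ?_⟩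
    have h1m : 1 - z ^ 2 / (1 + z ^ 2) = (1 + z ^ 2)⁻¹ := by field_simp; ring
    have hA : (z ^ 2 / (1 + z ^ 2)) ^ ((1:ℝ)/2) = z * (1 + z ^ 2) ^ (-(1/2) : ℝ) := by
      rw [div_eq_mul_inv, Real.mul_rpow (by positivity) (by positivity)]
      congr 1
      · rw [← Real.rpow_natCast z 2, ← Real.rpow_mul hz0.le]
        norm_num
      · rw [← Real.rpow_neg_one (1 + z ^ 2), ← Real.rpow_mul hd.le]
        norm_num
    have hB : ((1 + z ^ 2)⁻¹) ^ (-(1/2) : ℝ) = (1 + z ^ 2) ^ ((1:ℝ)/2) := by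
      rw [← Real.rpow_neg_one (1 + z ^ 2), ← Real.rpow_mul hd.le]
      norm_num
    rw [cov, h1m, show (1/2 : ℝ) = ((1:ℝ)/2) by norm_num, hA, hB, mul_assoc, ← Real.rpow_add hd]
    norm_num
lemma Ffun_zero_eq {s : ℝ} (hs : 1/2 < s) :
    Ffun 0 s = Real.sqrt π / 2 * Real.Gamma (s - 1/2) / Real.Gamma s := by
  have key := integral_image_eq_integral_abs_deriv_smul (f := cov) (f' := cov')
    measurableSet_Ioo (fun x hx => (cov_hasDeriv hx).hasDerivWithinAt) cov_inj
    (fun z => (1 + z ^ 2) ^ (-s))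
  rw [cov_image] at key
  have hFf : Ffun 0 s = ∫ z in Ioi (0:ℝ), (1 + z ^ 2) ^ (-s) := by
    rw [Ffun]; congr 1; funext z; simp
  rw [hFf, key]
  have heq : ∀ x ∈ Ioo (0:ℝ) 1,
      |cov' x| • (1 + cov x ^ 2) ^ (-s) = 2⁻¹ * (x ^ ((1/2:ℝ)-1) * (1-x) ^ ((s-1/2)-1)) := by
    intro x hx
    obtain ⟨h0, h1⟩ := hx
    have h1x : (0:ℝ) < 1 - x := by linarith
    have hc : 1 + cov x ^ 2 = (1-x)⁻¹ := by
      rw [cov_sq ⟨h0, h1⟩]; field_simp; ring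
    rw [hc, smul_eq_mul, abs_of_pos (by rw [cov']; positivity)]
    rw [← Real.rpow_neg_one (1-x), ← Real.rpow_mul h1x.le]
    rw [cov']
    rw [mul_assoc, mul_assoc, ← Real.rpow_add h1x]
    rw [show (-(3/2) + -1 * -s : ℝ) = s - 1/2 - 1 by ring, show (-(1/2) : ℝ) = 1/2 - 1 by norm_num]
  rw [setIntegral_congr_fun measurableSet_Ioo heq]
  rw [integral_const_mul, real_beta one_half_pos (by linarith)]
  rw [show (1/2 + (s - 1/2) : ℝ) = s by ring, Real.Gamma_one_half_eq]
  ring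

end ChangeVar

section Digamma

lemma analyticAt_rlog {x : ℝ} (hx : 0 < x) : AnalyticAt ℝ Real.log x := by
  have h1 : AnalyticAt ℂ Complex.log (x : ℂ) :=
    analyticAt_clog (Complex.ofReal_mem_slitPlane.mpr hx)
  have h2 : AnalyticAt ℝ (fun y : ℝ => (Complex.log (y : ℂ)).re) x := by
    exact (Complex.reCLM.analyticAt _).comp
      ((h1.restrictScalars).comp (Complex.ofRealCLM.analyticAt x))
  exact h2.congr (Eventually.of_forall fun y => Complex.log_ofReal_re y)

lemma analyticAt_rGamma {x : ℝ} (hx : 0 < x) : AnalyticAt ℝ Real.Gamma x := by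
  have hopen : IsOpen {z : ℂ | 0 < z.re} := isOpen_lt continuous_const Complex.continuous_re
  have h1 : AnalyticAt ℂ Complex.Gamma (x : ℂ) := by
    apply DifferentiableOn.analyticAt (s := {z : ℂ | 0 < z.re})
    · intro z hz
      exact (Complex.differentiableAt_Gamma z fun m => by
        intro h
        have : z.re = -(m:ℝ) := by rw [h]; simp
        have hm : (0:ℝ) ≤ (m:ℝ) := Nat.cast_nonneg m
        have := hz
        simp only [Set.mem_setOf_eq] at this
        linarith).differentiableWithinAt
    · exact hopen.mem_nhds (by simpa using hx)
  have h2 : AnalyticAt ℝ (fun y : ℝ => (Complex.Gamma (y : ℂ)).re) x :=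
    (Complex.reCLM.analyticAt _).comp
      ((h1.restrictScalars).comp (Complex.ofRealCLM.analyticAt x))
  exact h2.congr (Eventually.of_forall fun y => by
    show (Complex.Gamma (y:ℂ)).re = Real.Gamma y
    rw [Complex.Gamma_ofReal]; rfl)

lemma analyticOnNhd_logGamma : AnalyticOnNhd ℝ (fun y => Real.log (Real.Gamma y)) (Ioi (0:ℝ)) :=
  fun x hx => (analyticAt_rlog (Real.Gamma_pos_of_pos hx)).comp (analyticAt_rGamma hx)

lemma hasDerivAt_logGamma {x : ℝ} (hx : 0 < x) :
    HasDerivAt (fun y => Real.log (Real.Gamma y)) (digamma x) x :=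
  (analyticOnNhd_logGamma x hx).differentiableAt.hasDerivAt

lemma analyticOnNhd_digamma : AnalyticOnNhd ℝ digamma (Ioi (0:ℝ)) :=
  analyticOnNhd_logGamma.deriv

lemma hasDerivAt_digamma {x : ℝ} (hx : 0 < x) :
    HasDerivAt digamma (deriv digamma x) x :=
  (analyticOnNhd_digamma x hx).differentiableAt.hasDerivAt

end Digamma

section Endgame

noncomputable def Efun (s : ℝ) : ℝ :=
  Real.sqrt π / 2 * Real.exp (Real.log (Real.Gamma (s - 1/2)) - Real.log (Real.Gamma s))

noncomputable def ufun (s : ℝ) : ℝ := digamma (s - 1/2) - digamma s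

lemma Efun_eq {s : ℝ} (hs : 1/2 < s) :
    Efun s = Real.sqrt π / 2 * Real.Gamma (s - 1/2) / Real.Gamma s := by
  rw [Efun, Real.exp_sub, Real.exp_log (Real.Gamma_pos_of_pos (by linarith)),
    Real.exp_log (Real.Gamma_pos_of_pos (by linarith))]
  ring

lemma Ffun_zero_eq_Efun {s : ℝ} (hs : 1/2 < s) : Ffun 0 s = Efun s := by
  rw [Ffun_zero_eq hs, Efun_eq hs]

lemma hasDerivAt_Efun {s : ℝ} (hs : 1/2 < s) :
    HasDerivAt Efun (Efun s * ufun s) s := by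
  have hsub : HasDerivAt (fun t : ℝ => t - 1/2) 1 s := (hasDerivAt_id s).sub_const _
  have h1 : HasDerivAt (fun t : ℝ => Real.log (Real.Gamma (t - 1/2)))
      (digamma (s - 1/2)) s := by
    simpa [Function.comp_def] using (hasDerivAt_logGamma (by linarith : (0:ℝ) < s - 1/2)).comp s hsub
  have h2 : HasDerivAt (fun t : ℝ => Real.log (Real.Gamma t)) (digamma s) s :=
    hasDerivAt_logGamma (by linarith)
  have h3 : HasDerivAt (fun t : ℝ => Real.sqrt π / 2 * Real.exp (Real.log (Real.Gamma (t - 1/2)) - Real.log (Real.Gamma t)))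
      (Real.sqrt π / 2 * (Real.exp (Real.log (Real.Gamma (s - 1/2)) - Real.log (Real.Gamma s)) * (digamma (s - 1/2) - digamma s))) s := ((Real.hasDerivAt_exp _).comp s (h1.sub h2)).const_mul (Real.sqrt π / 2)
  refine h3.congr_deriv ?_
  rw [Efun, ufun]
  ring

lemma hasDerivAt_ufun {s : ℝ} (hs : 1/2 < s) :
    HasDerivAt ufun (deriv digamma (s - 1/2) - deriv digamma s) s := by
  have hsub : HasDerivAt (fun t : ℝ => t - 1/2) 1 s := (hasDerivAt_id s).sub_const _
  have h1 : HasDerivAt (fun t : ℝ => digamma (t - 1/2)) (deriv digamma (s - 1/2)) s := by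
    simpa [Function.comp_def] using (hasDerivAt_digamma (by linarith : (0:ℝ) < s - 1/2)).comp s hsub
  exact h1.sub (hasDerivAt_digamma (by linarith))

lemma Ffun_one_eq {s : ℝ} (hs : 1/2 < s) : Ffun 1 s = -(Efun s * ufun s) := by
  have hF0 : HasDerivAt (Ffun 0) (-(Ffun 1 s)) s := hasDerivAt_Ffun hs
  have hfe : Ffun 0 =ᶠ[𝓝 s] Efun :=
    eventually_of_mem (Ioi_mem_nhds hs) fun t ht => Ffun_zero_eq_Efun ht
  have hEs : HasDerivAt (Ffun 0) (Efun s * ufun s) s :=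
    (hasDerivAt_Efun hs).congr_of_eventuallyEq hfe
  have := hF0.unique hEs
  linarith

lemma Ffun_two_eq {s : ℝ} (hs : 1/2 < s) :
    Ffun 2 s = Efun s * (ufun s ^ 2 + (deriv digamma (s - 1/2) - deriv digamma s)) := by
  have hF1 : HasDerivAt (Ffun 1) (-(Ffun 2 s)) s := hasDerivAt_Ffun hs
  have hG : HasDerivAt (fun t => -(Efun t * ufun t))
      (-(Efun s * ufun s * ufun s + Efun s * (deriv digamma (s - 1/2) - deriv digamma s))) s :=
    ((hasDerivAt_Efun hs).mul (hasDerivAt_ufun hs)).neg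
  have hfe : Ffun 1 =ᶠ[𝓝 s] (fun t => -(Efun t * ufun t)) :=
    eventually_of_mem (Ioi_mem_nhds hs) fun t ht => Ffun_one_eq ht
  have hG' : HasDerivAt (Ffun 1)
      (-(Efun s * ufun s * ufun s + Efun s * (deriv digamma (s - 1/2) - deriv digamma s))) s :=
    hG.congr_of_eventuallyEq hfe
  have := hF1.unique hG'
  nlinarith [this]

end Endgame

theorem integral_one_add_sq_rpow_mul_log_sq (ν : ℝ) (hν : 0 < ν) :
    (∫ z in Set.Ioi (0 : ℝ), (1 + z ^ 2) ^ (-((ν + 1) / 2)) * (Real.log (1 + z ^ 2)) ^ 2)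
      = ((Dfun ν) ^ 2 - 2 * deriv Dfun ν) / (2 * Real.sqrt ν * Kfun ν) := by
  set s₀ : ℝ := (ν + 1) / 2 with hs₀_def
  have hs₀ : 1/2 < s₀ := by rw [hs₀_def]; linarith
  have hLHS : (∫ z in Set.Ioi (0 : ℝ), (1 + z ^ 2) ^ (-((ν + 1) / 2)) * (Real.log (1 + z ^ 2)) ^ 2)
      = Ffun 2 s₀ := rfl
  have hs₀sub : s₀ - 1/2 = ν/2 := by rw [hs₀_def]; ring
  -- u value
  have hu : ufun s₀ = -(Dfun ν) := by
    rw [ufun, hs₀sub, Dfun, hs₀_def]; ring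
  -- deriv Dfun
  have hinner1 : HasDerivAt (fun ν : ℝ => (ν + 1) / 2) (1/2) ν := by
    simpa using ((hasDerivAt_id ν).add_const 1).div_const 2
  have hinner2 : HasDerivAt (fun ν : ℝ => ν / 2) (1/2) ν := by
    simpa using (hasDerivAt_id ν).div_const 2
  have hd1 : HasDerivAt (fun ν : ℝ => digamma ((ν + 1) / 2))
      (deriv digamma ((ν + 1) / 2) * (1/2)) ν :=
    (hasDerivAt_digamma (by linarith : (0:ℝ) < (ν + 1) / 2)).comp ν hinner1
  have hd2 : HasDerivAt (fun ν : ℝ => digamma (ν / 2))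
      (deriv digamma (ν / 2) * (1/2)) ν :=
    (hasDerivAt_digamma (by linarith : (0:ℝ) < ν / 2)).comp ν hinner2
  have hD : HasDerivAt Dfun
      (deriv digamma ((ν + 1) / 2) * (1/2) - deriv digamma (ν / 2) * (1/2)) ν := hd1.sub hd2
  have hDderiv : deriv Dfun ν
      = deriv digamma ((ν + 1) / 2) * (1/2) - deriv digamma (ν / 2) * (1/2) := hD.deriv
  have hu' : deriv digamma (s₀ - 1/2) - deriv digamma s₀ = -2 * deriv Dfun ν := by
    rw [hs₀sub, hDderiv, hs₀_def]; ring
  have hmain : Ffun 2 s₀ = Efun s₀ * (Dfun ν ^ 2 - 2 * deriv Dfun ν) := by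
    rw [Ffun_two_eq hs₀, hu, hu']; ring
  have hE : Efun s₀ = Real.sqrt π / 2 * Real.Gamma (ν/2) / Real.Gamma ((ν+1)/2) := by
    rw [Efun_eq hs₀, hs₀sub, hs₀_def]
  rw [hLHS, hmain, hE, Kfun]
  have hsqrt : Real.sqrt (π * ν) = Real.sqrt π * Real.sqrt ν :=
    Real.sqrt_mul Real.pi_pos.le ν
  rw [hsqrt]
  have hG1 : Real.Gamma ((ν+1)/2) ≠ 0 := (Real.Gamma_pos_of_pos (by linarith)).ne'
  have hG2 : Real.Gamma (ν/2) ≠ 0 := (Real.Gamma_pos_of_pos (by linarith)).ne'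
  have hsπ : Real.sqrt π ≠ 0 := (Real.sqrt_pos.mpr Real.pi_pos).ne'
  have hsν : Real.sqrt ν ≠ 0 := (Real.sqrt_pos.mpr hν).ne'
  field_simp
end

section
/- The ratio √(2/x) · Γ((x+1)/2)/Γ(x/2) tends to 1 as the real number x tends to infinity. -/
open Real Filter

lemma gamma_half_le {y : ℝ} (hy : 0 < y) :
    Real.Gamma (y + 1/2) ≤ Real.Gamma y * Real.sqrt y := by
  have h := Real.Gamma_mul_add_mul_le_rpow_Gamma_mul_rpow_Gamma (s := y) (t := y + 1)
    hy (by linarith) (a := 1/2) (b := 1/2) (by norm_num) (by norm_num) (by norm_num)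
  have hG : 0 < Real.Gamma y := Real.Gamma_pos_of_pos hy
  have hrw : (1/2 : ℝ) * y + 1/2 * (y + 1) = y + 1/2 := by ring
  rw [hrw, Real.Gamma_add_one hy.ne'] at h
  have : Real.Gamma y ^ (1/2 : ℝ) * (y * Real.Gamma y) ^ (1/2 : ℝ)
      = Real.Gamma y * Real.sqrt y := by
    rw [Real.mul_rpow hy.le hG.le, Real.sqrt_eq_rpow,
      mul_comm (y ^ (1/2:ℝ)) (Real.Gamma y ^ (1/2:ℝ)), ← mul_assoc, ← Real.rpow_add hG,
      show (1/2:ℝ) + 1/2 = 1 by norm_num, Real.rpow_one]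
  linarith [h.trans_eq this]

lemma gamma_half_ge {y : ℝ} (hy : 0 < y) :
    y * Real.Gamma y ≤ Real.Gamma (y + 1/2) * Real.sqrt (y + 1/2) := by
  have h := Real.Gamma_mul_add_mul_le_rpow_Gamma_mul_rpow_Gamma (s := y + 1/2) (t := y + 3/2)
    (by linarith) (by linarith) (a := 1/2) (b := 1/2) (by norm_num) (by norm_num) (by norm_num)
  have hG : 0 < Real.Gamma (y + 1/2) := Real.Gamma_pos_of_pos (by linarith)
  have hrw : (1/2 : ℝ) * (y + 1/2) + 1/2 * (y + 3/2) = y + 1 := by ring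
  have hrw2 : y + (3:ℝ)/2 = (y + 1/2) + 1 := by ring
  rw [hrw, hrw2, Real.Gamma_add_one (by positivity : y + (1:ℝ)/2 ≠ 0),
    Real.Gamma_add_one hy.ne'] at h
  have : Real.Gamma (y + 1/2) ^ (1/2 : ℝ) * ((y + 1/2) * Real.Gamma (y + 1/2)) ^ (1/2 : ℝ)
      = Real.Gamma (y + 1/2) * Real.sqrt (y + 1/2) := by
    rw [Real.mul_rpow (by positivity) hG.le, Real.sqrt_eq_rpow,
      mul_comm ((y + 1/2) ^ (1/2:ℝ)) (Real.Gamma (y + 1/2) ^ (1/2:ℝ)), ← mul_assoc,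
      ← Real.rpow_add hG, show (1/2:ℝ) + 1/2 = 1 by norm_num, Real.rpow_one]
  linarith [h.trans_eq this]

theorem gamma_ratio_tendsto_one :
    Tendsto (fun x : ℝ => Real.sqrt (2 / x) * Real.Gamma ((x + 1) / 2) / Real.Gamma (x / 2))
      atTop (nhds 1) := by
  have hlow : Tendsto (fun x : ℝ => Real.sqrt (x / (x + 1))) atTop (nhds 1) := by
    have h0 : Tendsto (fun x : ℝ => (x + 1)⁻¹) atTop (nhds 0) :=
      tendsto_inv_atTop_zero.comp (tendsto_atTop_add_const_right atTop 1 tendsto_id)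
    have h1 : Tendsto (fun x : ℝ => 1 - (x + 1)⁻¹) atTop (nhds 1) := by
      simpa using (tendsto_const_nhds.sub h0)
    have h2 : Tendsto (fun x : ℝ => x / (x + 1)) atTop (nhds 1) := by
      refine h1.congr' ?_
      filter_upwards [eventually_gt_atTop 0] with x hx
      field_simp
      ring
    have := (Real.continuous_sqrt.tendsto 1).comp h2
    simpa [Function.comp_def] using this
  refine tendsto_of_tendsto_of_tendsto_of_le_of_le' hlow tendsto_const_nhds ?_ ?_
  · filter_upwards [eventually_gt_atTop 0] with x hx
    set y := x / 2 with hy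
    have hy0 : 0 < y := by positivity
    have hG : 0 < Real.Gamma y := Real.Gamma_pos_of_pos hy0
    have hsy : 0 < Real.sqrt y := Real.sqrt_pos.mpr hy0
    have hsy2 : 0 < Real.sqrt (y + 1/2) := Real.sqrt_pos.mpr (by linarith)
    have key := gamma_half_ge hy0
    -- rewrite the expression
    have e1 : (x + 1) / 2 = y + 1/2 := by rw [hy]; ring
    have e2 : Real.sqrt (2 / x) = 1 / Real.sqrt y := by
      rw [hy, one_div, ← Real.sqrt_inv]
      congr 1
      field_simp
    have e3 : Real.sqrt (x / (x + 1)) = Real.sqrt y / Real.sqrt (y + 1/2) := by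
      rw [← Real.sqrt_div hy0.le]
      congr 1
      rw [hy]
      field_simp
    rw [e1, e2, e3, div_le_div_iff₀ hsy2 hG, one_div, inv_mul_eq_div, div_mul_eq_mul_div, le_div_iff₀ hsy]
    have hyy : Real.sqrt y * Real.sqrt y = y := Real.mul_self_sqrt hy0.le
    nlinarith [key, hsy, hsy2, hG]
  · filter_upwards [eventually_gt_atTop 0] with x hx
    set y := x / 2 with hy
    have hy0 : 0 < y := by positivity
    have hG : 0 < Real.Gamma y := Real.Gamma_pos_of_pos hy0
    have hsy : 0 < Real.sqrt y := Real.sqrt_pos.mpr hy0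
    have key := gamma_half_le hy0
    have e1 : (x + 1) / 2 = y + 1/2 := by rw [hy]; ring
    have e2 : Real.sqrt (2 / x) = 1 / Real.sqrt y := by
      rw [hy, one_div, ← Real.sqrt_inv]
      congr 1
      field_simp
    rw [e1, e2, div_le_one hG, one_div, inv_mul_eq_div, div_le_iff₀ hsy]
    calc Real.Gamma (y + 1/2) ≤ Real.Gamma y * Real.sqrt y := key
    _ = _ := by ring
end
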